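/- Let a > 0 and define g(x̃) = ∫₀^{x̃} ln(√(1 + 2u/a) − 1) du − (ln 2)·x̃ for x̃ > 0. Then g'(x̃)·(2κ₂ − κ₁x̃) ≤ 0 for all x̃ > 0 where a = κ₂/(2κ₁), with equality if and only if x̃ = 4a; moreover g''(x̃) > 0 for all x̃ > 0. Hence g is a strictly convex Lyapunov function for the ODE ẋ = 2κ₂ − κ₁x at its unique equilibrium c = 4a = 2κ₂/κ₁. -/

import Mathlib

open Real MeasureTheory Set

/-- `log` is interval integrable on `[0, c]`. -/
lemma log_intInt {c : ℝ} (hc : 0 < c) : IntervalIntegrable Real.log volume 0 c := by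
  rw [intervalIntegrable_iff_integrableOn_Ioc_of_le hc.le]
  have hdom : IntegrableOn (fun u : ℝ => 2 * u ^ (-(1:ℝ)/2) + c) (Ioc 0 c) volume := by
    apply Integrable.add
    · have h := (intervalIntegral.intervalIntegrable_rpow' (a := 0) (b := c) (r := -(1:ℝ)/2) (by norm_num))
      rw [intervalIntegrable_iff_integrableOn_Ioc_of_le hc.le] at h
      exact h.const_mul 2
    · exact integrableOn_const (by simp [hc])
  refine Integrable.mono' hdom Real.measurable_log.aestronglyMeasurable ?_
  rw [ae_restrict_iff' measurableSet_Ioc]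
  filter_upwards with u hu
  have hu0 : 0 < u := hu.1
  have hrp : 0 < u ^ (-(1:ℝ)/2) := Real.rpow_pos_of_pos hu0 _
  rw [Real.norm_eq_abs]
  rcases le_or_gt u 1 with h1 | h1
  · have hl : Real.log u ≤ 0 := Real.log_nonpos hu0.le h1
    rw [abs_of_nonpos hl]
    have hlog : Real.log (u ^ (-(1:ℝ)/2)) = (-(1:ℝ)/2) * Real.log u := Real.log_rpow hu0 _
    have hle : Real.log (u ^ (-(1:ℝ)/2)) ≤ u ^ (-(1:ℝ)/2) - 1 :=
      Real.log_le_sub_one_of_pos hrp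
    nlinarith [hc.le]
  · have hl : 0 ≤ Real.log u := Real.log_nonneg h1.le
    rw [abs_of_nonneg hl]
    have := Real.log_le_sub_one_of_pos hu0
    nlinarith [hu.2]

/-- For `u > 0` and `a > 0`, `1 < √(1 + 2u/a)`. -/
lemma one_lt_sqrt_aux {a u : ℝ} (ha : 0 < a) (hu : 0 < u) :
    1 < Real.sqrt (1 + 2 * u / a) := by
  have h2 : (0:ℝ) < 2 * u / a := by positivity
  have : (1:ℝ)^2 < 1 + 2 * u / a := by nlinarith
  exact (Real.lt_sqrt (by norm_num)).mpr this

/-- Continuity of the integrand on `(0, ∞)`. -/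
lemma f_contOn {a : ℝ} (ha : 0 < a) :
    ContinuousOn (fun u : ℝ => Real.log (Real.sqrt (1 + 2 * u / a) - 1)) (Ioi 0) := by
  have hbase : Continuous fun u : ℝ => Real.sqrt (1 + 2 * u / a) - 1 := by
    fun_prop
  intro u hu
  have hne : Real.sqrt (1 + 2 * u / a) - 1 ≠ 0 :=
    ne_of_gt (sub_pos.mpr (one_lt_sqrt_aux ha hu))
  exact (hbase.continuousAt.log hne).continuousWithinAt

/-- The integrand is interval integrable on `[0, c]` despite the log singularity at `0`. -/
lemma f_intInt {a : ℝ} (ha : 0 < a) {c : ℝ} (hc : 0 < c) :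
    IntervalIntegrable (fun u : ℝ => Real.log (Real.sqrt (1 + 2 * u / a) - 1)) volume 0 c := by
  rw [intervalIntegrable_iff_integrableOn_Ioc_of_le hc.le]
  have hφ : IntegrableOn
      (fun u : ℝ => Real.log u + (Real.log 2 - Real.log a)
        - Real.log (Real.sqrt (1 + 2 * u / a) + 1)) (Ioc 0 c) volume := by
    apply Integrable.sub
    · exact ((intervalIntegrable_iff_integrableOn_Ioc_of_le hc.le).mp (log_intInt hc)).add
        (integrableOn_const (by simp [hc]))
    · have hcont : ContinuousOn
          (fun u : ℝ => Real.log (Real.sqrt (1 + 2 * u / a) + 1)) (Icc 0 c) := by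
        have hbase : Continuous fun u : ℝ => Real.sqrt (1 + 2 * u / a) + 1 := by fun_prop
        intro u _
        have hpos : 0 < Real.sqrt (1 + 2 * u / a) + 1 := by positivity
        exact (hbase.continuousAt.log (ne_of_gt hpos)).continuousWithinAt
      exact (hcont.integrableOn_Icc).mono_set Ioc_subset_Icc_self
  refine hφ.congr_fun ?_ measurableSet_Ioc
  intro u hu
  have hu0 : 0 < u := hu.1
  show Real.log u + (Real.log 2 - Real.log a) - Real.log (Real.sqrt (1 + 2 * u / a) + 1)
      = Real.log (Real.sqrt (1 + 2 * u / a) - 1)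
  set s := Real.sqrt (1 + 2 * u / a) with hs
  have ht : (0:ℝ) ≤ 1 + 2 * u / a := by positivity
  have hs1 : 1 < s := one_lt_sqrt_aux ha hu0
  have hsq : s ^ 2 = 1 + 2 * u / a := Real.sq_sqrt ht
  have hsp1 : 0 < s + 1 := by linarith
  have hkey : s - 1 = (2 * u / a) / (s + 1) := by
    rw [eq_div_iff (ne_of_gt hsp1)]
    nlinarith
  have h2ua : 0 < 2 * u / a := by positivity
  rw [hkey, Real.log_div (ne_of_gt h2ua) (ne_of_gt hsp1)]
  have hll : Real.log (2 * u / a) = Real.log 2 + Real.log u - Real.log a := by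
    rw [Real.log_div (by positivity) (ne_of_gt ha), Real.log_mul two_ne_zero (ne_of_gt hu0)]
  rw [hll]
  ring

/-- The derivative of `g` on `(0, ∞)`. -/
lemma hasDerivAt_g {a : ℝ} (ha : 0 < a) (g : ℝ → ℝ)
    (hg : ∀ x : ℝ, g x =
      (∫ u in (0 : ℝ)..x, Real.log (Real.sqrt (1 + 2 * u / a) - 1)) - Real.log 2 * x)
    {x : ℝ} (hx : 0 < x) :
    HasDerivAt g (Real.log (Real.sqrt (1 + 2 * x / a) - 1) - Real.log 2) x := by
  set f := fun u : ℝ => Real.log (Real.sqrt (1 + 2 * u / a) - 1) with hf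
  have hcont := f_contOn ha
  have h0 : IntervalIntegrable f volume 0 (x / 2) := f_intInt ha (half_pos hx)
  have hmid : ∀ y : ℝ, 0 < y → IntervalIntegrable f volume (x / 2) y := by
    intro y hy
    refine (hcont.mono ?_).intervalIntegrable
    intro z hz
    exact lt_of_lt_of_le (lt_min (half_pos hx) hy) hz.1
  have hftc : HasDerivAt (fun y => ∫ u in (x/2)..y, f u) (f x) x := by
    refine intervalIntegral.integral_hasDerivAt_right (hmid x hx)
      (hcont.stronglyMeasurableAtFilter isOpen_Ioi x hx) ?_
    have hbase : Continuous fun u : ℝ => Real.sqrt (1 + 2 * u / a) - 1 := by fun_prop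
    exact hbase.continuousAt.log (ne_of_gt (sub_pos.mpr (one_lt_sqrt_aux ha hx)))
  have hD : HasDerivAt
      (fun y => (∫ u in (0:ℝ)..(x/2), f u) + (∫ u in (x/2)..y, f u) - Real.log 2 * y)
      (f x - Real.log 2) x := by
    have hlin : HasDerivAt (fun y : ℝ => Real.log 2 * y) (Real.log 2) x := by
      simpa using (hasDerivAt_id x).const_mul (Real.log 2)
    have := ((hasDerivAt_const x (∫ u in (0:ℝ)..(x/2), f u)).add hftc).sub hlin
    rw [zero_add] at this
    exact this
  refine hD.congr_of_eventuallyEq ?_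
  filter_upwards [isOpen_Ioi.mem_nhds hx] with y hy
  rw [hg y, intervalIntegral.integral_add_adjacent_intervals h0 (hmid y hy)]

theorem stmt_17 (κ1 κ2 a : ℝ) (hκ1 : 0 < κ1) (hκ2 : 0 < κ2) (ha : a = κ2 / (2 * κ1))
    (g : ℝ → ℝ)
    (hg : ∀ x : ℝ, g x =
      (∫ u in (0 : ℝ)..x, Real.log (Real.sqrt (1 + 2 * u / a) - 1)) - Real.log 2 * x) :
    (∀ x : ℝ, 0 < x →
      (deriv g x * (2 * κ2 - κ1 * x) ≤ 0 ∧
        (deriv g x * (2 * κ2 - κ1 * x) = 0 ↔ x = 4 * a))) ∧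
    ∀ x : ℝ, 0 < x → 0 < deriv (deriv g) x := by
  have ha0 : 0 < a := by rw [ha]; positivity
  have hflow : ∀ x : ℝ, 2 * κ2 - κ1 * x = κ1 * (4 * a - x) := by
    intro x
    have h1 : κ1 * a = κ2 / 2 := by rw [ha]; field_simp
    nlinarith
  have hderiv : ∀ x : ℝ, 0 < x →
      deriv g x = Real.log (Real.sqrt (1 + 2 * x / a) - 1) - Real.log 2 := fun x hx =>
    (hasDerivAt_g ha0 g hg hx).deriv
  constructor
  · intro x hx
    have hd := hderiv x hx
    have hs1 : 1 < Real.sqrt (1 + 2 * x / a) := one_lt_sqrt_aux ha0 hx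
    have hsub : 0 < Real.sqrt (1 + 2 * x / a) - 1 := sub_pos.mpr hs1
    rcases lt_trichotomy x (4 * a) with h | h | h
    · have hslt : Real.sqrt (1 + 2 * x / a) < 3 := by
        rw [Real.sqrt_lt' (by norm_num)]
        have hxa : 2 * x / a < 8 := by rw [div_lt_iff₀ ha0]; linarith
        nlinarith
      have hdneg : deriv g x < 0 := by
        rw [hd]
        have := Real.log_lt_log hsub (show Real.sqrt (1 + 2 * x / a) - 1 < 2 by linarith)
        linarith
      have hfpos : 0 < 2 * κ2 - κ1 * x := by
        rw [hflow]; exact mul_pos hκ1 (by linarith)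
      have hlt : deriv g x * (2 * κ2 - κ1 * x) < 0 := mul_neg_of_neg_of_pos hdneg hfpos
      exact ⟨hlt.le, ⟨fun he => absurd he hlt.ne, fun he => absurd he h.ne⟩⟩
    · have hx9 : 1 + 2 * x / a = 9 := by rw [h]; field_simp; ring
      have hs3 : Real.sqrt (1 + 2 * x / a) = 3 := by
        rw [hx9, show (9:ℝ) = 3^2 by norm_num, Real.sqrt_sq (by norm_num)]
      have hd0 : deriv g x = 0 := by
        rw [hd, hs3]; norm_num
      rw [hd0, zero_mul]
      exact ⟨le_refl 0, ⟨fun _ => h, fun _ => rfl⟩⟩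
    · have hsgt : 3 < Real.sqrt (1 + 2 * x / a) := by
        refine (Real.lt_sqrt (by norm_num)).mpr ?_
        have hxa : 8 < 2 * x / a := by rw [lt_div_iff₀ ha0]; linarith
        nlinarith
      have hdpos : 0 < deriv g x := by
        rw [hd]
        have := Real.log_lt_log (by norm_num : (0:ℝ) < 2)
          (show (2:ℝ) < Real.sqrt (1 + 2 * x / a) - 1 by linarith)
        linarith
      have hfneg : 2 * κ2 - κ1 * x < 0 := by
        rw [hflow]; exact mul_neg_of_pos_of_neg hκ1 (by linarith)
      have hlt : deriv g x * (2 * κ2 - κ1 * x) < 0 := mul_neg_of_pos_of_neg hdpos hfneg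
      exact ⟨hlt.le, ⟨fun he => absurd he hlt.ne, fun he => absurd he h.ne'⟩⟩
  · intro x hx
    have hev : deriv g =ᶠ[nhds x]
        fun y => Real.log (Real.sqrt (1 + 2 * y / a) - 1) - Real.log 2 := by
      filter_upwards [isOpen_Ioi.mem_nhds hx] with y hy
      exact hderiv y hy
    rw [hev.deriv_eq]
    have ht0 : 0 < 1 + 2 * x / a := by positivity
    have hs1 : 1 < Real.sqrt (1 + 2 * x / a) := one_lt_sqrt_aux ha0 hx
    have hspos : 0 < Real.sqrt (1 + 2 * x / a) := by linarith
    have hinner : HasDerivAt (fun y : ℝ => 1 + 2 * y / a) (2 / a) x := by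
      have h1 : HasDerivAt (fun y : ℝ => 2 * y / a) (2 / a) x := by
        simpa [mul_comm] using (((hasDerivAt_id x).const_mul 2).div_const a)
      simpa using h1.const_add 1
    have hsq : HasDerivAt (fun y : ℝ => Real.sqrt (1 + 2 * y / a))
        (1 / (2 * Real.sqrt (1 + 2 * x / a)) * (2 / a)) x :=
      (Real.hasDerivAt_sqrt (ne_of_gt ht0)).comp x hinner
    have hlog : HasDerivAt
        (fun y : ℝ => Real.log (Real.sqrt (1 + 2 * y / a) - 1) - Real.log 2)
        ((1 / (2 * Real.sqrt (1 + 2 * x / a)) * (2 / a)) /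
          (Real.sqrt (1 + 2 * x / a) - 1)) x := by
      exact ((hsq.sub_const 1).log (ne_of_gt (sub_pos.mpr hs1))).sub_const (Real.log 2)
    rw [hlog.deriv]
    have hnum : 0 < 1 / (2 * Real.sqrt (1 + 2 * x / a)) * (2 / a) := by positivity
    exact div_pos hnum (sub_pos.mpr hs1)
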